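/- Let Ω, Θ be nonempty closed convex sets in R^n, ū ∈ S_2 a maximizer of d(·;Θ) over Ω, v̄ = P(ū; Θ), and t ≥ 0, x̄ = ū + t(ū − v̄). Then P(x̄; Θ) = v̄ and P(x̄; Ω) = ū, and f(x̄) = f(ū) where f(x) = d(x; Ω) − d(x; Θ). -/
import Mathlib

open Classical in
noncomputable def proj (n : ℕ) (Q : Set (EuclideanSpace ℝ (Fin n)))
    (x : EuclideanSpace ℝ (Fin n)) : EuclideanSpace ℝ (Fin n) :=
  if h : ∃ p ∈ Q, dist x p = Metric.infDist x Q then h.choose else x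

open RealInnerProductSpace

lemma proj_spec {n : ℕ} {Q : Set (EuclideanSpace ℝ (Fin n))}
    (hc : IsClosed Q) (hne : Q.Nonempty) (x : EuclideanSpace ℝ (Fin n)) :
    proj n Q x ∈ Q ∧ dist x (proj n Q x) = Metric.infDist x Q := by
  have h : ∃ p ∈ Q, dist x p = Metric.infDist x Q := by
    obtain ⟨y, hy, hd⟩ := hc.exists_infDist_eq_dist hne x
    exact ⟨y, hy, hd.symm⟩
  rw [proj, dif_pos h]
  exact ⟨h.choose_spec.1, h.choose_spec.2⟩

lemma infDist_eq_iInf_norm {n : ℕ} {Q : Set (EuclideanSpace ℝ (Fin n))}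
    (x : EuclideanSpace ℝ (Fin n)) :
    Metric.infDist x Q = ⨅ w : Q, ‖x - (w : EuclideanSpace ℝ (Fin n))‖ := by
  rw [Metric.infDist_eq_iInf]
  simp_rw [dist_eq_norm]

lemma variational {n : ℕ} {Q : Set (EuclideanSpace ℝ (Fin n))}
    (hconv : Convex ℝ Q) {x p : EuclideanSpace ℝ (Fin n)} (hp : p ∈ Q)
    (hd : dist x p = Metric.infDist x Q) :
    ∀ w ∈ Q, ⟪x - p, w - p⟫ ≤ 0 := by
  refine (norm_eq_iInf_iff_real_inner_le_zero hconv hp).mp ?_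
  rw [← dist_eq_norm, hd, infDist_eq_iInf_norm]

lemma proj_eq_of_inner {n : ℕ} {Q : Set (EuclideanSpace ℝ (Fin n))}
    (hc : IsClosed Q) (hconv : Convex ℝ Q) {x p : EuclideanSpace ℝ (Fin n)}
    (hp : p ∈ Q) (hvar : ∀ w ∈ Q, ⟪x - p, w - p⟫ ≤ 0) :
    proj n Q x = p := by
  have hne : Q.Nonempty := ⟨p, hp⟩
  obtain ⟨hamem, had⟩ := proj_spec hc hne x
  set a := proj n Q x with ha
  have h1 : ⟪x - a, p - a⟫ ≤ 0 := variational hconv hamem had p hp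
  have h2 : ⟪x - p, a - p⟫ ≤ 0 := hvar a hamem
  have h3 : ⟪p - a, p - a⟫ = ⟪x - a, p - a⟫ + ⟪p - x, p - a⟫ := by
    rw [← inner_add_left]
    congr 1
    abel
  have h4 : ⟪p - x, p - a⟫ = ⟪x - p, a - p⟫ := by
    rw [show p - x = -(x - p) by abel, show p - a = -(a - p) by abel,
      inner_neg_neg]
  have h5 : ⟪p - a, p - a⟫ ≤ 0 := by rw [h3, h4]; linarith
  have h6 : p - a = 0 := by
    have := real_inner_self_nonpos.mp h5
    exact this
  have : p = a := by
    have := sub_eq_zero.mp h6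
    exact this
  exact this.symm

theorem ray_points_properties (n : ℕ)
    (Ω Θ : Set (EuclideanSpace ℝ (Fin n)))
    (hΩ : Ω.Nonempty) (hΩc : IsClosed Ω) (hΩconv : Convex ℝ Ω)
    (hΘ : Θ.Nonempty) (hΘc : IsClosed Θ) (hΘconv : Convex ℝ Θ)
    (hdiff : (Ω \ Θ).Nonempty)
    (f : EuclideanSpace ℝ (Fin n) → ℝ)
    (hf : ∀ x, f x = Metric.infDist x Ω - Metric.infDist x Θ)
    (ub : EuclideanSpace ℝ (Fin n)) (hub : ub ∈ Ω)
    (hmax : ∀ u ∈ Ω, Metric.infDist u Θ ≤ Metric.infDist ub Θ)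
    (vb : EuclideanSpace ℝ (Fin n)) (hvb : vb = proj n Θ ub)
    (t : ℝ) (ht : 0 ≤ t)
    (xb : EuclideanSpace ℝ (Fin n)) (hxb : xb = ub + t • (ub - vb)) :
    proj n Θ xb = vb ∧ proj n Ω xb = ub ∧ f xb = f ub := by
  obtain ⟨hvmem, hvd⟩ : vb ∈ Θ ∧ dist ub vb = Metric.infDist ub Θ := by
    rw [hvb]; exact proj_spec hΘc hΘ ub
  have hvarv : ∀ w ∈ Θ, ⟪ub - vb, w - vb⟫ ≤ 0 := variational hΘconv hvmem hvd
  have hxv : xb - vb = (1 + t) • (ub - vb) := by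
    rw [hxb, add_smul, one_smul]; abel
  have hxu : xb - ub = t • (ub - vb) := by rw [hxb]; abel
  -- Claim 1
  have c1 : proj n Θ xb = vb := by
    refine proj_eq_of_inner hΘc hΘconv hvmem (fun w hw => ?_)
    rw [hxv, real_inner_smul_left]
    have := hvarv w hw
    nlinarith
  -- key inequality for Claim 2
  have key : ∀ u ∈ Ω, ⟪ub - vb, u - ub⟫ ≤ 0 := by
    intro u hu
    obtain ⟨w, hw, hwd⟩ := hΘc.exists_infDist_eq_dist hΘ u
    have h1 : ‖u - w‖ ≤ ‖ub - vb‖ := by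
      rw [← dist_eq_norm, ← dist_eq_norm, ← hwd, hvd]
      exact hmax u hu
    have h2 : ⟪ub - vb, vb - w⟫ ≥ 0 := by
      have := hvarv w hw
      have h4 : ⟪ub - vb, vb - w⟫ = -⟪ub - vb, w - vb⟫ := by
        rw [show vb - w = -(w - vb) by abel, inner_neg_right]
      linarith [h4 ▸ neg_nonneg.mpr this]
    have h3 : ⟪ub - vb, u - w⟫ = ⟪ub - vb, u - ub⟫ + ⟪ub - vb, ub - vb⟫
        + ⟪ub - vb, vb - w⟫ := by
      rw [← inner_add_right, ← inner_add_right]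
      congr 1
      abel
    have hcs : ⟪ub - vb, u - w⟫ ≤ ‖ub - vb‖ * ‖u - w‖ := real_inner_le_norm _ _
    have hself : ⟪ub - vb, ub - vb⟫ = ‖ub - vb‖ ^ 2 := real_inner_self_eq_norm_sq _
    nlinarith [norm_nonneg (ub - vb), norm_nonneg (u - w)]
  -- Claim 2
  have c2 : proj n Ω xb = ub := by
    refine proj_eq_of_inner hΩc hΩconv hub (fun u hu => ?_)
    rw [hxu, real_inner_smul_left]
    exact mul_nonpos_of_nonneg_of_nonpos ht (key u hu)
  -- Claim 3
  have hdΘ : Metric.infDist xb Θ = (1 + t) * ‖ub - vb‖ := by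
    obtain ⟨_, had⟩ := proj_spec hΘc hΘ xb
    rw [← had, c1, dist_eq_norm, hxv, norm_smul, Real.norm_eq_abs,
      abs_of_nonneg (by linarith)]
  have hdΩ : Metric.infDist xb Ω = t * ‖ub - vb‖ := by
    obtain ⟨_, had⟩ := proj_spec hΩc hΩ xb
    rw [← had, c2, dist_eq_norm, hxu, norm_smul, Real.norm_eq_abs, abs_of_nonneg ht]
  have hubΩ : Metric.infDist ub Ω = 0 := Metric.infDist_zero_of_mem hub
  have hubΘ : Metric.infDist ub Θ = ‖ub - vb‖ := by rw [← hvd, dist_eq_norm]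
  refine ⟨c1, c2, ?_⟩
  rw [hf, hf, hdΘ, hdΩ, hubΩ, hubΘ]
  ring
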